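/- Let A, B, V be types, g : A → A, out : A → V, h : B → V → B, and define on global states A × B × List V the sender step SND (σ, ρ, q) = (g σ, ρ, q ++ [out σ]) and the receiver step RCV (σ, ρ, q) = (σ, h ρ q.head!, q.tail). Fix an initial state (σ₀, ρ₀, q₀). Call a word w : List Bool (true = SND, false = RCV) admissible if in every prefix of w the number of RCV steps is at most q₀.length plus the number of SND steps in that prefix. Then for any two admissible words w₁ and w₂ containing the same number of SND steps and the same number of RCV steps, folding the corresponding step functions over w₁ and over w₂ from (σ₀, ρ₀, q₀) yields the same final global state. That is, the final state of a producer–consumer execution over a FIFO channel is independent of the interleaving of sender and receiver steps. -/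

import Mathlib

/-- Sender step on a global producer–consumer state: update the sender state and
append the sender's output to the tail of the FIFO channel. -/
def sndStep {A B V : Type*} (g : A → A) (out : A → V)
    (st : A × B × List V) : A × B × List V :=
  (g st.1, st.2.1, st.2.2 ++ [out st.1])

/-- Receiver step on a global producer–consumer state: consume the head of the
FIFO channel and update the receiver state with it. -/
def rcvStep {A B V : Type*} [Inhabited V] (h : B → V → B)
    (st : A × B × List V) : A × B × List V :=
  (st.1, h st.2.1 st.2.2.head!, st.2.2.tail)

/-- A word over {SND, RCV} (true = sender step, false = receiver step) is
admissible from an initial queue `q₀` if in every prefix the number of receiver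
steps is at most `q₀.length` plus the number of sender steps. -/
def admissible (q₀len : ℕ) (w : List Bool) : Prop :=
  ∀ m : ℕ, (w.take m).count false ≤ q₀len + (w.take m).count true


/-- canonical supply after m sends -/
def supply {A V : Type*} (g : A → A) (out : A → V) (σ₀ : A) (q₀ : List V) (m : ℕ) : List V :=
  q₀ ++ (List.range m).map (fun i => out (g^[i] σ₀))

/-- canonical state after m sends and n receives -/
def canon {A B V : Type*} (g : A → A) (out : A → V) (h : B → V → B)
    (σ₀ : A) (ρ₀ : B) (q₀ : List V) (m n : ℕ) : A × B × List V :=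
  (g^[m] σ₀, ((supply g out σ₀ q₀ m).take n).foldl h ρ₀, (supply g out σ₀ q₀ m).drop n)

lemma supply_len {A V : Type*} (g : A → A) (out : A → V) (σ₀ : A) (q₀ : List V) (m : ℕ) :
    (supply g out σ₀ q₀ m).length = q₀.length + m := by
  simp [supply]

lemma supply_succ {A V : Type*} (g : A → A) (out : A → V) (σ₀ : A) (q₀ : List V) (m : ℕ) :
    supply g out σ₀ q₀ (m+1) = supply g out σ₀ q₀ m ++ [out (g^[m] σ₀)] := by
  simp [supply, List.range_succ]

lemma admissible_append {n : ℕ} {w : List Bool} {b : Bool}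
    (hw : admissible n (w ++ [b])) : admissible n w := by
  intro m
  have h1 : w.take m = (w ++ [b]).take (min m w.length) := by
    rw [List.take_append_of_le_length (min_le_right _ _), ← List.take_take, List.take_length]
  rw [h1]; exact hw _

lemma key {A B V : Type*} [Inhabited V]
    (g : A → A) (out : A → V) (h : B → V → B)
    (σ₀ : A) (ρ₀ : B) (q₀ : List V) :
    ∀ w : List Bool, admissible q₀.length w →
      w.foldl (fun st b => if b then sndStep g out st else rcvStep h st) (σ₀, ρ₀, q₀)
        = canon g out h σ₀ ρ₀ q₀ (w.count true) (w.count false) := by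
  intro w
  induction w using List.reverseRecOn with
  | nil => intro _; simp [canon, supply]
  | append_singleton w b ih =>
    intro hadm
    have hw := admissible_append hadm
    have hbound : w.count false ≤ q₀.length + w.count true := by
      have := hw w.length
      simpa using this
    rw [List.foldl_append, ih hw]
    set m := w.count true
    set n := w.count false
    cases b with
    | true =>
      have hn : n ≤ (supply g out σ₀ q₀ m).length := by
        rw [supply_len]; exact hbound
      simp only [List.foldl_cons, List.foldl_nil, if_pos]
      have hc : (w ++ [true]).count true = m + 1 := by simp [m, List.count_append]
      have hc' : (w ++ [true]).count false = n := by simp [n, List.count_append]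
      rw [hc, hc']
      simp only [canon, sndStep, supply_succ]
      refine Prod.ext ?_ (Prod.ext ?_ ?_)
      · simp [Function.iterate_succ_apply']
      · simp [List.take_append_of_le_length hn]
      · simp [List.drop_append_of_le_length hn]
    | false =>
      have hstrict : n + 1 ≤ q₀.length + m := by
        have := hadm (w.length + 1)
        simpa [List.take_append, m, n, List.count_append,
          List.take_of_length_le (Nat.le_succ w.length)] using this
      have hn : n < (supply g out σ₀ q₀ m).length := by
        rw [supply_len]; omega
      simp only [List.foldl_cons, List.foldl_nil, if_neg]
      have hc : (w ++ [false]).count true = m := by simp [m, List.count_append]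
      have hc' : (w ++ [false]).count false = n + 1 := by simp [n, List.count_append]
      rw [hc, hc']
      have hdrop : (supply g out σ₀ q₀ m).drop n
          = (supply g out σ₀ q₀ m)[n] :: (supply g out σ₀ q₀ m).drop (n+1) :=
        List.drop_eq_getElem_cons hn
      have htake : (supply g out σ₀ q₀ m).take (n+1)
          = (supply g out σ₀ q₀ m).take n ++ [(supply g out σ₀ q₀ m)[n]] := by
        rw [List.take_succ, List.getElem?_eq_getElem hn]; rfl
      simp only [canon, rcvStep, hdrop, htake, List.foldl_append, List.foldl_cons,
        List.foldl_nil, List.head!_cons, List.tail_cons]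
      simp

/-- The final state of a producer–consumer execution over a FIFO channel is
independent of the interleaving of sender and receiver steps: any two admissible
words with the same numbers of SND and RCV steps yield the same final global
state. -/
theorem producer_consumer_interleaving_independent {A B V : Type*} [Inhabited V]
    (g : A → A) (out : A → V) (h : B → V → B)
    (σ₀ : A) (ρ₀ : B) (q₀ : List V)
    (w₁ w₂ : List Bool)
    (h₁ : admissible q₀.length w₁) (h₂ : admissible q₀.length w₂)
    (hsnd : w₁.count true = w₂.count true)
    (hrcv : w₁.count false = w₂.count false) :
    w₁.foldl (fun st b => if b then sndStep g out st else rcvStep h st) (σ₀, ρ₀, q₀) =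
    w₂.foldl (fun st b => if b then sndStep g out st else rcvStep h st) (σ₀, ρ₀, q₀) := by
  rw [key g out h σ₀ ρ₀ q₀ w₁ h₁, key g out h σ₀ ρ₀ q₀ w₂ h₂, hsnd, hrcv]
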